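/- Let S be a dense subsemigroup of ((0,∞), +), viewed as a discrete semigroup, and let 0⁺ = ⋂_{ε>0} cl_{βS_d}(S ∩ (0,ε)). Then 0⁺ is a nonempty compact subsemigroup of (βS_d, +). -/
import Mathlib


attribute [local instance] Ultrafilter.add

/-- `0⁺` for a dense subsemigroup `S` of `((0,∞),+)`: ultrafilters (on `ℝ`, concentrated
on `S`) containing `S ∩ (0,ε)` for every `ε > 0`. -/
def zeroPlusAdd (S : Set ℝ) : Set (Ultrafilter ℝ) :=
  {p | ∀ ε : ℝ, 0 < ε → {x | x ∈ S ∧ x < ε} ∈ p}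

/-- For `S` a dense subsemigroup of `((0,∞),+)`, the set `0⁺` is a nonempty compact
subsemigroup of `(βS_d, +)`. -/
theorem zeroPlusAdd_nonempty_compact_subsemigroup (S : Set ℝ)
    (hSpos : ∀ x ∈ S, 0 < x)
    (hSadd : ∀ x ∈ S, ∀ y ∈ S, x + y ∈ S)
    (hSdense : ∀ a b : ℝ, 0 ≤ a → a < b → ∃ s ∈ S, s ∈ Set.Ioo a b) :
    (zeroPlusAdd S).Nonempty ∧ IsCompact (zeroPlusAdd S) ∧
      ∀ p ∈ zeroPlusAdd S, ∀ q ∈ zeroPlusAdd S, p + q ∈ zeroPlusAdd S := by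
  refine ⟨?_, ?_, ?_⟩
  · -- nonempty: extend the filter 𝓝[S ∩ Ioi 0] 0 to an ultrafilter
    have hne : (nhdsWithin (0:ℝ) (S ∩ Set.Ioi 0)).NeBot := by
      rw [← mem_closure_iff_nhdsWithin_neBot, mem_closure_iff]
      intro o ho h0
      obtain ⟨ε, hε, hsub⟩ := Metric.isOpen_iff.mp ho 0 h0
      obtain ⟨t, htS, ht⟩ := hSdense 0 ε le_rfl hε
      exact ⟨t, hsub (by simp [Real.dist_eq, abs_of_pos ht.1, ht.2]), htS, ht.1⟩
    haveI := hne
    obtain ⟨u, hu⟩ := Ultrafilter.exists_le (nhdsWithin (0:ℝ) (S ∩ Set.Ioi 0))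
    refine ⟨u, fun ε hε => ?_⟩
    apply hu
    have h1 : Set.Iio ε ∈ nhds (0:ℝ) := Iio_mem_nhds hε
    have h2 : Set.Iio ε ∩ (S ∩ Set.Ioi 0) ∈ nhdsWithin (0:ℝ) (S ∩ Set.Ioi 0) :=
      Filter.inter_mem (nhdsWithin_le_nhds h1) self_mem_nhdsWithin
    exact Filter.mem_of_superset h2 (fun x hx => ⟨hx.2.1, hx.1⟩)
  · -- compact: closed subset of the compact space of ultrafilters
    have : zeroPlusAdd S = ⋂ ε ∈ Set.Ioi (0:ℝ), {u : Ultrafilter ℝ | {x | x ∈ S ∧ x < ε} ∈ u} := by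
      ext p; simp [zeroPlusAdd, Set.mem_Ioi]
    rw [this]
    exact (isClosed_biInter fun ε _ => ultrafilter_isClosed_basic _).isCompact
  · intro p hp q hq ε hε
    have hmem : {x | x ∈ S ∧ x < ε} ∈ (p + q : Ultrafilter ℝ) ↔
        ∀ᶠ x in (p : Filter ℝ), ∀ᶠ y in (q : Filter ℝ), x + y ∈ {x | x ∈ S ∧ x < ε} :=
      Ultrafilter.eventually_add p q _
    rw [hmem]
    filter_upwards [hp (ε/2) (by linarith)] with x hx
    filter_upwards [hq (ε/2) (by linarith)] with y hy
    exact ⟨hSadd x hx.1 y hy.1, by linarith [hx.2, hy.2]⟩
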